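/- Let x_1, ..., x_{N+1} be N+1 vectors in ℂ^2. The set of N-fold tensor powers {x_k^⊗N}_{k=1}^{N+1} is linearly independent (and hence a basis of the symmetric subspace of (ℂ^2)^⊗N) if and only if the vectors x_1, ..., x_{N+1} are pairwise linearly independent. -/

import Mathlib

open scoped BigOperators

/-- The `N`-fold tensor power of a qubit vector `x : Fin 2 → ℂ`, written as a
coefficient tensor on `(Fin N → Fin 2)`. -/
def tpow (x : Fin 2 → ℂ) (N : ℕ) : (Fin N → Fin 2) → ℂ :=
  fun f => ∏ i, x (f i)

/-- A state of `N` qubits is symmetric if it is invariant under every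
permutation of the tensor factors. -/
def IsSymmetricState {N : ℕ} (ψ : (Fin N → Fin 2) → ℂ) : Prop :=
  ∀ σ : Equiv.Perm (Fin N), ∀ f : Fin N → Fin 2, ψ (f ∘ σ) = ψ f

/-- A family of qubit vectors is pairwise linearly independent if every two
distinct members are linearly independent. -/
def PairwiseLinIndep {D : ℕ} (x : Fin D → Fin 2 → ℂ) : Prop :=
  ∀ k l : Fin D, k ≠ l → LinearIndependent ℂ ![x k, x l]

/-- Optimal bond dimension: the minimal `D` such that `ψ` is a sum of `D`
`N`-fold tensor powers of qubit vectors. -/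
noncomputable def bondDim {N : ℕ} (ψ : (Fin N → Fin 2) → ℂ) : ℕ :=
  sInf {D | ∃ x : Fin D → Fin 2 → ℂ, ψ = ∑ k : Fin D, tpow (x k) N}

/-- Standard basis vector `|0⟩` of `ℂ²`. -/
def e0 : Fin 2 → ℂ := fun i => if i = 0 then 1 else 0

/-- Standard basis vector `|1⟩` of `ℂ²`. -/
def e1 : Fin 2 → ℂ := fun i => if i = 1 then 1 else 0

/-- The GHZ state of `N` qubits. -/
noncomputable def GHZ (N : ℕ) : (Fin N → Fin 2) → ℂ :=
  (1 / (Real.sqrt 2 : ℂ)) • (tpow e0 N + tpow e1 N)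

/-- The W state of `N` qubits. -/
noncomputable def Wstate (N : ℕ) : (Fin N → Fin 2) → ℂ :=
  fun f => (1 / (Real.sqrt N : ℂ)) *
    ∑ j : Fin N, ∏ i : Fin N, (if i = j then e1 (f i) else e0 (f i))

/-- Tensor product of an `M`-qubit tensor and an `L`-qubit tensor. -/
def otimes {M L : ℕ} (ξ : (Fin M → Fin 2) → ℂ) (χ : (Fin L → Fin 2) → ℂ) :
    (Fin (M + L) → Fin 2) → ℂ :=
  fun f => ξ (fun i => f (Fin.castAdd L i)) * χ (fun j => f (Fin.natAdd M j))

/-- Schmidt rank of an `(M, L)`-bipartite state: the minimal number of product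
terms needed to express it. -/
noncomputable def schmidtRank {M L : ℕ} (ψ : (Fin (M + L) → Fin 2) → ℂ) : ℕ :=
  sInf {s | ∃ ξ : Fin s → (Fin M → Fin 2) → ℂ, ∃ χ : Fin s → (Fin L → Fin 2) → ℂ,
    ψ = ∑ k : Fin s, otimes (ξ k) (χ k)}

/-- Reduced density matrix of the first `M` qubits of an `(M + L)`-qubit state,
obtained by tracing out the last `L` qubits. -/
noncomputable def rdm (M L : ℕ) (ψ : (Fin (M + L) → Fin 2) → ℂ) :
    Matrix (Fin M → Fin 2) (Fin M → Fin 2) ℂ :=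
  Matrix.of fun a b => ∑ g : Fin L → Fin 2, ψ (Fin.append a g) * star (ψ (Fin.append b g))

/-- for `N+1` vectors in `ℂ²`, the family of their `N`-fold tensor
powers is linearly independent (hence a basis of the symmetric subspace of
`(ℂ²)^{⊗N}`, which has dimension `N+1`) iff the vectors are pairwise linearly
independent. -/
lemma li2_det {u v : Fin 2 → ℂ} (h : LinearIndependent ℂ ![u, v]) :
    u 0 * v 1 - u 1 * v 0 ≠ 0 := by
  intro hdet
  rw [LinearIndependent.pair_iff] at h
  have h1 := h (v 0) (-u 0) (by
    funext i
    fin_cases i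
    · simp only [Fin.mk_zero, Fin.mk_one, Pi.add_apply, Pi.smul_apply, smul_eq_mul, Pi.zero_apply]
      ring
    · simp only [Fin.mk_zero, Fin.mk_one, Pi.add_apply, Pi.smul_apply, smul_eq_mul, Pi.zero_apply]
      linear_combination -hdet)
  have h2 := h (v 1) (-u 1) (by
    funext i
    fin_cases i
    · simp only [Fin.mk_zero, Fin.mk_one, Pi.add_apply, Pi.smul_apply, smul_eq_mul, Pi.zero_apply]
      linear_combination hdet
    · simp only [Fin.mk_zero, Fin.mk_one, Pi.add_apply, Pi.smul_apply, smul_eq_mul, Pi.zero_apply]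
      ring)
  have hu0 : u 0 = 0 := neg_eq_zero.mp h1.2
  have hu1 : u 1 = 0 := neg_eq_zero.mp h2.2
  have h3 := h 1 0 (by
    funext i
    fin_cases i <;>
      simp only [Fin.mk_zero, Fin.mk_one, Pi.add_apply, Pi.smul_apply, smul_eq_mul,
        Pi.zero_apply, one_mul, zero_mul, add_zero] <;> [exact hu0; exact hu1])
  exact one_ne_zero h3.1

lemma aux_card {N : ℕ} (m : ℕ) (hm : m ≤ N) :
    ((Finset.univ : Finset (Fin N)).filter fun i : Fin N => (i : ℕ) < m).card = m := by
  have heq : ((Finset.univ : Finset (Fin N)).filter fun i : Fin N => (i : ℕ) < m)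
      = Finset.map (Fin.castLEEmb hm) Finset.univ := by
    ext i
    constructor
    · intro hi
      rw [Finset.mem_filter] at hi
      exact Finset.mem_map.mpr ⟨⟨i, hi.2⟩, Finset.mem_univ _, Fin.ext rfl⟩
    · intro hi
      obtain ⟨b, -, rfl⟩ := Finset.mem_map.mp hi
      exact Finset.mem_filter.mpr ⟨Finset.mem_univ _, b.2⟩
  rw [heq, Finset.card_map, Finset.card_univ, Fintype.card_fin]

theorem tpow_linearIndependent_iff_pairwise (N : ℕ) (x : Fin (N + 1) → Fin 2 → ℂ) :
    LinearIndependent ℂ (fun k : Fin (N + 1) => tpow (x k) N) ↔ PairwiseLinIndep x := by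
  constructor
  · intro hLI k l hkl
    have hN : N ≠ 0 := by
      rintro rfl
      exact hkl (Fin.ext (by omega))
    rw [LinearIndependent.pair_iff]
    intro s t hst
    have hxk : tpow (x k) N ≠ 0 := hLI.ne_zero k
    have ht : t = 0 := by
      by_contra ht
      set c : ℂ := -(s / t) with hc
      have hxl : ∀ i, x l i = c * x k i := by
        intro i
        have := congrFun hst i
        simp only [Fin.mk_zero, Fin.mk_one, Pi.add_apply, Pi.smul_apply, smul_eq_mul, Pi.zero_apply] at this
        have e : x l i = t⁻¹ * (t * x l i) := by rw [← mul_assoc, inv_mul_cancel₀ ht, one_mul]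
        rw [e, show t * x l i = -(s * x k i) by linear_combination this, hc]
        ring
      have htl : tpow (x l) N = (c ^ N) • tpow (x k) N := by
        funext f
        simp only [tpow, Pi.smul_apply, smul_eq_mul]
        calc ∏ i, x l (f i) = ∏ i : Fin N, c * x k (f i) := by
              exact Finset.prod_congr rfl fun i _ => hxl (f i)
          _ = c ^ N * ∏ i, x k (f i) := by
              rw [Finset.prod_mul_distrib, Finset.prod_const, Finset.card_univ,
                Fintype.card_fin]
      set g : Fin (N + 1) → ℂ := fun j => if j = k then c ^ N else if j = l then -1 else 0
        with hg
      have hsum : ∑ j, g j • tpow (x j) N = 0 := by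
        rw [← Finset.sum_subset (Finset.subset_univ ({k, l} : Finset (Fin (N + 1))))
          (fun j _ hj => by
            simp only [Finset.mem_insert, Finset.mem_singleton, not_or] at hj
            simp [hg, hj.1, hj.2])]
        rw [Finset.sum_pair hkl]
        simp [hg, hkl.symm, htl, smul_smul]
      have := Fintype.linearIndependent_iff.mp hLI g hsum l
      simp [hg, hkl.symm] at this
    subst ht
    refine ⟨?_, rfl⟩
    by_contra hs
    apply hxk
    have hxk0 : x k = 0 := by
      funext i
      have := congrFun hst i
      simp only [Pi.add_apply, Pi.smul_apply, smul_eq_mul, Pi.zero_apply, zero_mul,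
        add_zero] at this
      simpa [hs] using this
    funext f
    simp [tpow, hxk0, Finset.prod_eq_zero (Finset.mem_univ (⟨0, Nat.pos_of_ne_zero hN⟩ : Fin N))]
  · intro hp
    by_cases hN : N = 0
    · subst hN
      haveI : Unique (Fin (0 + 1)) := ⟨⟨0⟩, fun a => Fin.ext (by omega)⟩
      rw [linearIndependent_unique_iff]
      intro h0
      have := congrFun h0 (fun i => i.elim0)
      simpa [tpow] using this
    -- main case
    rw [Fintype.linearIndependent_iff]
    intro c hc
    have hnt : Nontrivial (Fin (N + 1)) := by
      refine ⟨0, 1, ?_⟩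
      simp [Fin.ext_iff, Nat.mod_eq_of_lt (by omega : 1 < N + 1)]
    have hx0 : ∀ k, x k ≠ 0 := by
      intro k
      obtain ⟨l, hl⟩ := exists_ne k
      have := (hp k l hl.symm).ne_zero 0
      simpa using this
    obtain ⟨t, ht⟩ := (Set.finite_range (fun k : Fin (N + 1) => -(x k 0) / (x k 1))).infinite_compl.nonempty
    set a : Fin (N + 1) → ℂ := fun k => x k 0 + t * x k 1 with hadef
    have ha : ∀ k, a k ≠ 0 := by
      intro k hak
      by_cases h1 : x k 1 = 0
      · have h0 : x k 0 = 0 := by simpa [hadef, h1] using hak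
        exact hx0 k (by funext i; fin_cases i <;> simpa)
      · apply ht
        refine ⟨k, ?_⟩
        rw [div_eq_iff h1]
        linear_combination -hak
    set r : Fin (N + 1) → ℂ := fun k => x k 1 / a k with hrdef
    have hr : Function.Injective r := by
      intro k l hrkl
      by_contra hne
      have hdet := li2_det (hp k l hne)
      rw [hrdef] at hrkl
      have hcross : x k 1 * a l = x l 1 * a k :=
        (div_eq_div_iff (ha k) (ha l)).mp hrkl
      apply hdet
      simp only [hadef] at hcross
      linear_combination -hcross
    have h0 : ∀ f : Fin N → Fin 2, ∑ k, c k * tpow (x k) N f = 0 := by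
      intro f
      have := congrFun hc f
      simpa [Finset.sum_apply] using this
    have key : ∀ m : Fin (N + 1),
        ∑ k, c k * (x k 1 ^ (m : ℕ) * a k ^ (N - (m : ℕ))) = 0 := by
      intro m
      set W : Fin N → Fin 2 → ℂ := fun i s =>
        if (i : ℕ) < (m : ℕ) then (if s = 1 then 1 else 0) else (if s = 0 then 1 else t)
        with hW
      have hfac : ∀ k i, (∑ s : Fin 2, x k s * W i s)
          = if (i : ℕ) < (m : ℕ) then x k 1 else a k := by
        intro k i
        rw [Fin.sum_univ_two]
        by_cases h : (i : ℕ) < (m : ℕ) <;> simp [hW, h, hadef] <;> ring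
      have hprod : ∀ k, (∏ i : Fin N, if (i : ℕ) < (m : ℕ) then x k 1 else a k)
          = x k 1 ^ (m : ℕ) * a k ^ (N - (m : ℕ)) := by
        intro k
        rw [Finset.prod_ite]
        simp only [Finset.prod_const]
        have hc1 : ((Finset.univ : Finset (Fin N)).filter fun i : Fin N => (i : ℕ) < (m : ℕ)).card
            = (m : ℕ) := aux_card _ m.is_le
        have hc2 := Finset.card_filter_add_card_filter_not
          (s := (Finset.univ : Finset (Fin N))) (p := fun i => (i : ℕ) < (m : ℕ))
        rw [Finset.card_univ, Fintype.card_fin] at hc2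
        rw [hc1] at hc2 ⊢
        rw [show (Finset.filter (fun i : Fin N => ¬(i : ℕ) < (m : ℕ)) Finset.univ).card
          = N - (m : ℕ) from by omega]
      have hswap : ∑ k, c k * ∏ i, (∑ s : Fin 2, x k s * W i s) = 0 := by
        calc ∑ k, c k * ∏ i, (∑ s : Fin 2, x k s * W i s)
            = ∑ k, ∑ f : Fin N → Fin 2, c k * (tpow (x k) N f * ∏ i, W i (f i)) := by
              refine Finset.sum_congr rfl fun k _ => ?_
              rw [Fintype.prod_sum (fun i s => x k s * W i s), Finset.mul_sum]
              refine Finset.sum_congr rfl fun f _ => ?_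
              rw [tpow, ← Finset.prod_mul_distrib]
          _ = ∑ f : Fin N → Fin 2, (∑ k, c k * tpow (x k) N f) * ∏ i, W i (f i) := by
              rw [Finset.sum_comm]
              exact Finset.sum_congr rfl fun f _ => by rw [Finset.sum_mul]; exact Finset.sum_congr rfl fun _ _ => by ring
          _ = 0 := by simp [h0]
      calc ∑ k, c k * (x k 1 ^ (m : ℕ) * a k ^ (N - (m : ℕ)))
          = ∑ k, c k * ∏ i, (∑ s : Fin 2, x k s * W i s) := by
            refine Finset.sum_congr rfl fun k _ => ?_
            rw [show (∏ i, ∑ s : Fin 2, x k s * W i s)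
                = ∏ i : Fin N, if (i : ℕ) < (m : ℕ) then x k 1 else a k from
              Finset.prod_congr rfl fun i _ => hfac k i, hprod k]
        _ = 0 := hswap
    set d : Fin (N + 1) → ℂ := fun k => c k * a k ^ N with hd
    have hvan : Matrix.mulVec (Matrix.transpose (Matrix.vandermonde r)) d = 0 := by
      funext m
      have hterm : ∀ k, r k ^ (m : ℕ) * d k
          = c k * (x k 1 ^ (m : ℕ) * a k ^ (N - (m : ℕ))) := by
        intro k
        have h1 : a k ^ (N - (m : ℕ)) * a k ^ (m : ℕ) = a k ^ N :=
          pow_sub_mul_pow _ m.is_le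
        have h2 : a k ^ (m : ℕ) ≠ 0 := pow_ne_zero _ (ha k)
        rw [show r k = x k 1 / a k from rfl, show d k = c k * a k ^ N from rfl,
          div_pow, ← h1]
        field_simp
      have hentry : Matrix.mulVec (Matrix.transpose (Matrix.vandermonde r)) d m
          = ∑ k, r k ^ (m : ℕ) * d k := by
        simp [Matrix.mulVec, dotProduct, Matrix.transpose_apply, Matrix.vandermonde]
      rw [hentry, Pi.zero_apply]
      exact (Finset.sum_congr rfl fun k _ => hterm k).trans (key m)
    have hdetv : (Matrix.transpose (Matrix.vandermonde r)).det ≠ 0 := by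
      rw [Matrix.det_transpose, Matrix.det_vandermonde]
      rw [Finset.prod_ne_zero_iff]
      intro i _
      rw [Finset.prod_ne_zero_iff]
      intro j hj
      exact sub_ne_zero.mpr fun h => (Finset.mem_Ioi.mp hj).ne' (hr h)
    have hdz := Matrix.eq_zero_of_mulVec_eq_zero hdetv hvan
    intro j
    have := congrFun hdz j
    simp only [hd, Pi.zero_apply] at this
    exact (mul_eq_zero.mp this).resolve_right (pow_ne_zero _ (ha j))
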